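/- For all nonnegative integers α, β, σ, the alternating sum over ρ from 0 to σ of (-1)^ρ * C(ρ+β, β) * C(α+β+σ+1, α+β+ρ+1) equals C(σ+α, α). -/

import Mathlib

open Finset

lemma key_zero (β σ : ℕ) :
    ∑ ρ ∈ Finset.range (σ + 2),
      (-1 : ℤ) ^ ρ * (Nat.choose (ρ + β) β) * (Nat.choose (β + σ + 1) (β + ρ)) = 0 := by
  have h : ∀ ρ ∈ Finset.range (σ + 2),
      (-1 : ℤ) ^ ρ * (Nat.choose (ρ + β) β) * (Nat.choose (β + σ + 1) (β + ρ))
      = (Nat.choose (β + σ + 1) β) * ((-1 : ℤ) ^ ρ * (Nat.choose (σ + 1) ρ)) := by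
    intro ρ hρ
    rw [Finset.mem_range] at hρ
    have hρ' : ρ ≤ σ + 1 := Nat.lt_succ_iff.mp hρ
    have key := Nat.choose_mul (n := β + σ + 1) (k := β + ρ) (s := β)
      (Nat.le_add_right _ _)
    have h2 : (β + σ + 1) - β = σ + 1 := by omega
    have h3 : (β + ρ) - β = ρ := by omega
    rw [h2, h3] at key
    have h4 : Nat.choose (β + ρ) β = Nat.choose (ρ + β) β := by rw [Nat.add_comm]
    rw [h4] at key
    have key' : ((Nat.choose (β + σ + 1) (β + ρ)) : ℤ) * (Nat.choose (ρ + β) β)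
        = (Nat.choose (β + σ + 1) β) * (Nat.choose (σ + 1) ρ) := by exact_mod_cast key
    calc (-1 : ℤ) ^ ρ * (Nat.choose (ρ + β) β) * (Nat.choose (β + σ + 1) (β + ρ))
        = (-1 : ℤ) ^ ρ * ((Nat.choose (β + σ + 1) (β + ρ)) * (Nat.choose (ρ + β) β)) := by ring
      _ = (-1 : ℤ) ^ ρ * ((Nat.choose (β + σ + 1) β) * (Nat.choose (σ + 1) ρ)) := by rw [key']
      _ = (Nat.choose (β + σ + 1) β) * ((-1 : ℤ) ^ ρ * (Nat.choose (σ + 1) ρ)) := by ring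
  rw [Finset.sum_congr rfl h, ← Finset.mul_sum]
  have hz := Int.alternating_sum_range_choose_of_ne (n := σ + 1) (by omega)
  rw [hz, mul_zero]

/-- Combinatorial identity (eq. 81):
`∑_{ρ=0}^{σ} (-1)^ρ C(ρ+β, β) C(α+β+σ+1, α+β+ρ+1) = C(σ+α, α)`. -/
theorem stmt_1 (α β σ : ℕ) :
    ∑ ρ ∈ Finset.range (σ + 1),
      (-1 : ℤ) ^ ρ * (Nat.choose (ρ + β) β) * (Nat.choose (α + β + σ + 1) (α + β + ρ + 1))
      = Nat.choose (σ + α) α := by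
  induction α generalizing σ with
  | zero =>
    induction σ with
    | zero => simp
    | succ σ ihσ =>
      have split : ∀ ρ ∈ Finset.range (σ + 2),
          (-1 : ℤ) ^ ρ * (Nat.choose (ρ + β) β) * (Nat.choose (0 + β + (σ+1) + 1) (0 + β + ρ + 1))
          = (-1 : ℤ) ^ ρ * (Nat.choose (ρ + β) β) * (Nat.choose (0 + β + σ + 1) (0 + β + ρ + 1))
            + (-1 : ℤ) ^ ρ * (Nat.choose (ρ + β) β) * (Nat.choose (β + σ + 1) (β + ρ)) := by
        intro ρ _
        have hp : Nat.choose (0 + β + (σ+1) + 1) (0 + β + ρ + 1)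
            = Nat.choose (0 + β + σ + 1) (0 + β + ρ) + Nat.choose (0 + β + σ + 1) (0 + β + ρ + 1) := by
          have e1 : 0 + β + (σ+1) + 1 = (0 + β + σ + 1) + 1 := by omega
          rw [e1, Nat.choose_succ_succ']
        rw [hp]
        have e2 : 0 + β + σ + 1 = β + σ + 1 := by omega
        have e3 : 0 + β + ρ = β + ρ := by omega
        rw [e2, e3]
        push_cast
        ring
      rw [Finset.sum_congr rfl split, Finset.sum_add_distrib, key_zero, add_zero,
        Finset.sum_range_succ]
      have hz : Nat.choose (0 + β + σ + 1) (0 + β + (σ+1) + 1) = 0 :=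
        Nat.choose_eq_zero_of_lt (by omega)
      rw [hz]
      push_cast
      rw [mul_zero, add_zero, ihσ]
      simp
  | succ α ihα =>
    induction σ with
    | zero => simp
    | succ σ ihσ =>
      have split : ∀ ρ ∈ Finset.range (σ + 2),
          (-1 : ℤ) ^ ρ * (Nat.choose (ρ + β) β) * (Nat.choose ((α+1) + β + (σ+1) + 1) ((α+1) + β + ρ + 1))
          = (-1 : ℤ) ^ ρ * (Nat.choose (ρ + β) β) * (Nat.choose ((α+1) + β + σ + 1) ((α+1) + β + ρ + 1))
            + (-1 : ℤ) ^ ρ * (Nat.choose (ρ + β) β) * (Nat.choose (α + β + (σ+1) + 1) (α + β + ρ + 1)) := by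
        intro ρ _
        have hp : Nat.choose ((α+1) + β + (σ+1) + 1) ((α+1) + β + ρ + 1)
            = Nat.choose ((α+1) + β + σ + 1) ((α+1) + β + ρ)
              + Nat.choose ((α+1) + β + σ + 1) ((α+1) + β + ρ + 1) := by
          have e1 : (α+1) + β + (σ+1) + 1 = ((α+1) + β + σ + 1) + 1 := by omega
          rw [e1, Nat.choose_succ_succ']
        rw [hp]
        have e2 : (α+1) + β + σ + 1 = α + β + (σ+1) + 1 := by omega
        have e3 : (α+1) + β + ρ = α + β + ρ + 1 := by omega
        rw [e2, e3]
        push_cast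
        ring
      rw [Finset.sum_congr rfl split, Finset.sum_add_distrib, ihα (σ + 1),
        Finset.sum_range_succ]
      have hz : Nat.choose ((α+1) + β + σ + 1) ((α+1) + β + (σ+1) + 1) = 0 :=
        Nat.choose_eq_zero_of_lt (by omega)
      rw [hz]
      push_cast
      rw [mul_zero, add_zero, ihσ]
      have e4 : (σ + 1 + (α + 1)) = (σ + (α + 1)) + 1 := by omega
      rw [e4, Nat.choose_succ_succ']
      have e5 : σ + (α + 1) = σ + 1 + α := by omega
      rw [e5]
      push_cast
      ring
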